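/- Let A, B be bounded linear operators on a Banach space X and define the error e_i(t) = c_i(t) − c(t) of the iterative splitting scheme, where c(t) = exp(t(A+B))c₀. Then the errors satisfy the recursive integral relation e_i(t) = ∫₀ᵗ exp((t−s)D_i) E_i e_{i−1}(s) ds (for i ≥ 2, with (D_i,E_i) alternating between (A,B) and (B,A)), and consequently ‖e_i(t)‖ ≤ (K^{i-1} t^{i-1}/(i−1)!)·sup_{s∈[0,t]}‖e₁(s)‖ with K = max(‖A‖,‖B‖)e^{t·max(‖A‖,‖B‖)}. -/

import Mathlib

open scoped Nat

open NormedSpace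
set_option synthInstance.maxHeartbeats 1000000
set_option maxHeartbeats 2000000

section Aux
variable {X : Type*} [NormedAddCommGroup X] [NormedSpace ℝ X] [CompleteSpace X]

lemma norm_exp_le_exp_norm_clm (M : X →L[ℝ] X) :
    ‖NormedSpace.exp M‖ ≤ Real.exp ‖M‖ := by
  rw [NormedSpace.exp_eq_tsum (𝕂 := ℝ)]
  have h1 : Real.exp ‖M‖ = ∑' n : ℕ, ‖M‖ ^ n / n ! := by
    rw [Real.exp_eq_exp_ℝ, NormedSpace.exp_eq_tsum_div]
  rw [h1]
  refine (norm_tsum_le_tsum_norm (NormedSpace.norm_expSeries_summable' M)).trans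
    (Summable.tsum_le_tsum ?_ (NormedSpace.norm_expSeries_summable' M)
      (Real.summable_pow_div_factorial ‖M‖))
  intro n
  calc ‖(n !⁻¹ : ℝ) • M ^ n‖ = (n ! : ℝ)⁻¹ * ‖M ^ n‖ := by
        rw [norm_smul ((n ! : ℝ)⁻¹) (M ^ n), Real.norm_eq_abs, abs_of_nonneg (by positivity)]
    _ ≤ (n ! : ℝ)⁻¹ * ‖M‖ ^ n := by
        gcongr
        rcases Nat.eq_zero_or_pos n with h | h
        · simpa [h, ContinuousLinearMap.one_def] using
            ContinuousLinearMap.norm_id_le (E := X) (𝕜 := ℝ)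
        · exact norm_pow_le' M h
    _ = ‖M‖ ^ n / n ! := by ring

lemma duhamel (M : X →L[ℝ] X) (f u : ℝ → X) (hf : Continuous f)
    (hu0 : u 0 = 0) (hu : ∀ t, HasDerivAt u (M (u t) + f t) t) (t : ℝ) :
    u t = ∫ s in (0:ℝ)..t, (NormedSpace.exp ((t - s) • M)) (f s) := by
  let +nondep : NormedAlgebra ℚ (X →L[ℝ] X) := .restrictScalars ℚ ℝ (X →L[ℝ] X)
  have hcomm : ∀ a : ℝ, Commute M (NormedSpace.exp (a • (-M))) := fun a =>
    (((Commute.refl M).neg_right).smul_right a).exp_right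
  set v : ℝ → X := fun s => (NormedSpace.exp (s • (-M))) (u s) with hvdef
  have hvderiv : ∀ s : ℝ, HasDerivAt v ((NormedSpace.exp (s • (-M))) (f s)) s := by
    intro s
    have h1 : HasDerivAt (fun s : ℝ => NormedSpace.exp (s • (-M)))
        ((-M) * NormedSpace.exp (s • (-M))) s :=
      hasDerivAt_exp_smul_const' (𝕂 := ℝ) (-M) s
    have h2 := h1.clm_apply (hu s)
    have key : M ((NormedSpace.exp (s • (-M))) (u s)) =
        (NormedSpace.exp (s • (-M))) (M (u s)) := by
      have h := (hcomm s).eq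
      rw [← ContinuousLinearMap.mul_apply, h, ContinuousLinearMap.mul_apply]
    convert h2 using 1
    rw [ContinuousLinearMap.mul_apply, ContinuousLinearMap.neg_apply, map_add, key]
    abel
  have hexpc : Continuous fun s : ℝ => NormedSpace.exp (s • (-M)) :=
    NormedSpace.exp_continuous.comp (continuous_id.smul continuous_const)
  have hvc : Continuous fun s : ℝ => (NormedSpace.exp (s • (-M))) (f s) :=
    hexpc.clm_apply hf
  have hint : IntervalIntegrable (fun s => (NormedSpace.exp (s • (-M))) (f s))
      MeasureTheory.volume 0 t := hvc.intervalIntegrable _ _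
  have heq := intervalIntegral.integral_eq_sub_of_hasDerivAt
      (f := v) (fun s _ => hvderiv s) hint
  have hv0 : v 0 = 0 := by simp [hvdef, hu0]
  have hvt : (NormedSpace.exp (t • (-M))) (u t)
      = ∫ s in (0:ℝ)..t, (NormedSpace.exp (s • (-M))) (f s) := by
    rw [heq, hv0, sub_zero]
  have hinv : (NormedSpace.exp (t • M)) * (NormedSpace.exp (t • (-M))) = 1 := by
    rw [← NormedSpace.exp_add_of_commute
      ((((Commute.refl M).neg_right).smul_left t).smul_right t)]
    rw [smul_neg, add_neg_cancel, NormedSpace.exp_zero]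
  calc u t = ((NormedSpace.exp (t • M)) * (NormedSpace.exp (t • (-M)))) (u t) := by
        rw [hinv, ContinuousLinearMap.one_apply]
    _ = (NormedSpace.exp (t • M)) ((NormedSpace.exp (t • (-M))) (u t)) := by
        rw [ContinuousLinearMap.mul_apply]
    _ = (NormedSpace.exp (t • M))
          (∫ s in (0:ℝ)..t, (NormedSpace.exp (s • (-M))) (f s)) := by rw [hvt]
    _ = ∫ s in (0:ℝ)..t,
          (NormedSpace.exp (t • M)) ((NormedSpace.exp (s • (-M))) (f s)) :=
        ((NormedSpace.exp (t • M)).intervalIntegral_comp_comm hint).symm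
    _ = ∫ s in (0:ℝ)..t, (NormedSpace.exp ((t - s) • M)) (f s) := by
        refine intervalIntegral.integral_congr fun s _ => ?_
        have h1 : (t - s) • M = t • M + s • (-M) := by
          rw [smul_neg, sub_smul, sub_eq_add_neg]
        rw [h1, NormedSpace.exp_add_of_commute
          ((((Commute.refl M).neg_right).smul_left t).smul_right s),
          ContinuousLinearMap.mul_apply]

end Aux


/-- Error recursion and bound for the iterative splitting scheme: with
`e_i = c_i − c`, `e_i(t) = ∫₀ᵗ exp((t−s)D_i) E_i e_{i−1}(s) ds` and
`‖e_i(t)‖ ≤ K^{i−1} t^{i−1}/(i−1)! · sup_{s∈[0,t]} ‖e₁(s)‖` with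
`K = max(‖A‖,‖B‖) e^{t max(‖A‖,‖B‖)}`. -/
theorem splitting_error_recursion {X : Type*} [NormedAddCommGroup X]
    [NormedSpace ℝ X] [CompleteSpace X] (A B : X →L[ℝ] X) (c₀ : X)
    (D E : ℕ → (X →L[ℝ] X))
    (hD : ∀ i, D i = if Even i then B else A)
    (hE : ∀ i, E i = if Even i then A else B)
    (c : ℕ → ℝ → X)
    (hinit : ∀ i, 1 ≤ i → c i 0 = c₀)
    (hc1 : ∀ t : ℝ, HasDerivAt (c 1) (A (c 1 t)) t)
    (hode : ∀ i, 2 ≤ i → ∀ t : ℝ,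
      HasDerivAt (c i) ((D i) (c i t) + (E i) (c (i - 1) t)) t)
    (cexact : ℝ → X) (hcexact : ∀ t, cexact t = (NormedSpace.exp (t • (A + B))) c₀)
    (e : ℕ → ℝ → X) (he : ∀ i t, e i t = c i t - cexact t) :
    (∀ i, 2 ≤ i → ∀ t : ℝ, 0 ≤ t →
        e i t = ∫ s in (0:ℝ)..t, (NormedSpace.exp ((t - s) • D i)) ((E i) (e (i - 1) s))) ∧
      ∀ i, 1 ≤ i → ∀ t : ℝ, 0 ≤ t →
        ‖e i t‖ ≤
          (max ‖A‖ ‖B‖ * Real.exp (t * max ‖A‖ ‖B‖)) ^ (i - 1) * t ^ (i - 1) /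
              (i - 1)! *
            ⨆ s : Set.Icc (0:ℝ) t, ‖e 1 s‖ := by
  have hcd : ∀ t : ℝ, HasDerivAt cexact ((A + B) (cexact t)) t := by
    intro t
    have h1 := (hasDerivAt_exp_smul_const' (𝕂 := ℝ) (A + B) t).clm_apply
      (hasDerivAt_const t c₀)
    simp only [map_zero, add_zero, ContinuousLinearMap.mul_apply] at h1
    have hfun : cexact = fun t => (NormedSpace.exp (t • (A + B))) c₀ := funext hcexact
    rw [hcexact t, hfun]
    exact h1
  have hDE : ∀ i, D i + E i = A + B := by
    intro i; rw [hD, hE]; by_cases h : Even i <;> simp [h, add_comm]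
  have hccont : ∀ i, 1 ≤ i → Continuous (c i) := by
    intro i hi
    rcases eq_or_lt_of_le hi with h | h
    · rw [← h]
      exact continuous_iff_continuousAt.mpr fun t => (hc1 t).continuousAt
    · exact continuous_iff_continuousAt.mpr fun t => (hode i h t).continuousAt
  have hcexcont : Continuous cexact :=
    continuous_iff_continuousAt.mpr fun t => (hcd t).continuousAt
  have hecont : ∀ i, 1 ≤ i → Continuous (e i) := by
    intro i hi
    have hfun : e i = fun t => c i t - cexact t := funext (he i)
    rw [hfun]; exact (hccont i hi).sub hcexcont
  have he0 : ∀ i, 1 ≤ i → e i 0 = 0 := by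
    intro i hi
    rw [he, hinit i hi, hcexact]
    simp [NormedSpace.exp_zero]
  have hederiv : ∀ i, 2 ≤ i → ∀ t, HasDerivAt (e i)
      ((D i) (e i t) + (E i) (e (i - 1) t)) t := by
    intro i hi t
    have h1 := (hode i hi t).sub (hcd t)
    have hfun : e i = fun t => c i t - cexact t := funext (he i)
    have hder : (D i) (e i t) + (E i) (e (i - 1) t)
        = (D i) (c i t) + (E i) (c (i - 1) t) - (A + B) (cexact t) := by
      rw [he i t, he (i - 1) t, ← hDE i]
      simp only [map_sub, ContinuousLinearMap.add_apply]
      abel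
    rw [hder, hfun]
    exact h1
  have hrec : ∀ i, 2 ≤ i → ∀ t : ℝ,
      e i t = ∫ s in (0:ℝ)..t, (NormedSpace.exp ((t - s) • D i)) ((E i) (e (i - 1) s)) :=
    fun i hi t => duhamel (D i) (fun s => (E i) (e (i - 1) s)) (e i)
      ((E i).continuous.comp (hecont (i - 1) (by omega)))
      (he0 i (by omega)) (hederiv i hi) t
  refine ⟨fun i hi t _ => hrec i hi t, ?_⟩
  set K₀ : ℝ := max ‖A‖ ‖B‖ with hK₀def
  have hK₀ : 0 ≤ K₀ := le_trans (norm_nonneg A) (le_max_left _ _)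
  have hDn : ∀ i, ‖D i‖ ≤ K₀ := by
    intro i; rw [hD]; split_ifs
    exacts [le_max_right _ _, le_max_left _ _]
  have hEn : ∀ i, ‖E i‖ ≤ K₀ := by
    intro i; rw [hE]; split_ifs
    exacts [le_max_left _ _, le_max_right _ _]
  have hbound : ∀ T : ℝ, 0 ≤ T → ∀ n : ℕ, ∀ t : ℝ, t ∈ Set.Icc 0 T →
      ‖e (n + 1) t‖ ≤ (K₀ * Real.exp (T * K₀)) ^ n * t ^ n / n ! *
        ⨆ s : Set.Icc (0:ℝ) T, ‖e 1 s‖ := by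
    intro T hT
    set S := ⨆ s : Set.Icc (0:ℝ) T, ‖e 1 s‖ with hSdef
    have hbdd : BddAbove (Set.range fun s : Set.Icc (0:ℝ) T => ‖e 1 s‖) := by
      obtain ⟨C, hC⟩ := isCompact_Icc.bddAbove_image ((hecont 1 le_rfl).norm.continuousOn)
      refine ⟨C, ?_⟩
      rintro x ⟨s, rfl⟩
      exact hC ⟨(s : ℝ), s.2, rfl⟩
    have hSle : ∀ s, s ∈ Set.Icc (0:ℝ) T → ‖e 1 s‖ ≤ S := fun s hs =>
      le_ciSup hbdd (⟨s, hs⟩ : Set.Icc (0:ℝ) T)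
    have hS0 : 0 ≤ S := le_trans (norm_nonneg _) (hSle 0 ⟨le_rfl, hT⟩)
    set K : ℝ := K₀ * Real.exp (T * K₀) with hKdef
    have hK : 0 ≤ K := mul_nonneg hK₀ (Real.exp_nonneg _)
    intro n
    induction n with
    | zero =>
      intro t ht
      simpa using hSle t ht
    | succ n ih =>
      intro t ht
      have h2 : (2 : ℕ) ≤ n + 1 + 1 := by omega
      have hrw : n + 1 + 1 - 1 = n + 1 := by omega
      rw [hrec (n + 1 + 1) h2 t]
      have hptw : ∀ s ∈ Set.uIoc (0:ℝ) t,
          ‖(NormedSpace.exp ((t - s) • D (n + 1 + 1))) ((E (n + 1 + 1)) (e (n + 1 + 1 - 1) s))‖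
            ≤ K ^ (n + 1) * S / n ! * s ^ n := by
        intro s hs
        rw [Set.uIoc_of_le ht.1] at hs
        have hsIcc : s ∈ Set.Icc (0:ℝ) T := ⟨hs.1.le, hs.2.trans ht.2⟩
        have hexpb : ‖NormedSpace.exp ((t - s) • D (n + 1 + 1))‖ ≤ Real.exp (T * K₀) := by
          refine (norm_exp_le_exp_norm_clm _).trans (Real.exp_le_exp.mpr ?_)
          rw [norm_smul (t - s) (D (n + 1 + 1)), Real.norm_eq_abs,
            abs_of_nonneg (by linarith [hs.2] : (0:ℝ) ≤ t - s)]
          exact mul_le_mul (by linarith [ht.2, hs.1] : t - s ≤ T) (hDn _) (norm_nonneg _) hT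
        rw [hrw]
        calc ‖(NormedSpace.exp ((t - s) • D (n + 1 + 1))) ((E (n + 1 + 1)) (e (n + 1) s))‖
            ≤ ‖NormedSpace.exp ((t - s) • D (n + 1 + 1))‖ * ‖(E (n + 1 + 1)) (e (n + 1) s)‖ :=
              ContinuousLinearMap.le_opNorm _ _
          _ ≤ Real.exp (T * K₀) * (K₀ * (K ^ n * s ^ n / n ! * S)) := by
              refine mul_le_mul hexpb ?_ (norm_nonneg _) (Real.exp_nonneg _)
              calc ‖(E (n + 1 + 1)) (e (n + 1) s)‖ ≤ ‖E (n + 1 + 1)‖ * ‖e (n + 1) s‖ :=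
                    ContinuousLinearMap.le_opNorm _ _
                _ ≤ K₀ * (K ^ n * s ^ n / n ! * S) :=
                    mul_le_mul (hEn _) (ih s hsIcc) (norm_nonneg _) hK₀
          _ = K ^ (n + 1) * S / n ! * s ^ n := by rw [hKdef]; ring
      have hgint : IntervalIntegrable (fun s : ℝ => K ^ (n + 1) * S / n ! * s ^ n)
          MeasureTheory.volume 0 t :=
        (continuous_const.mul (continuous_pow n)).intervalIntegrable 0 t
      have hle := intervalIntegral.norm_integral_le_of_norm_le ht.1
          (MeasureTheory.ae_of_all _ fun s hs => hptw s (by rwa [Set.uIoc_of_le ht.1])) hgint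
      have hgval : (∫ s in (0:ℝ)..t, K ^ (n + 1) * S / n ! * s ^ n)
          = K ^ (n + 1) * S / n ! * (t ^ (n + 1) / (n + 1)) := by
        rw [intervalIntegral.integral_const_mul, integral_pow]
        simp
      have hgnn : (0:ℝ) ≤ ∫ s in (0:ℝ)..t, K ^ (n + 1) * S / n ! * s ^ n := by
        rw [hgval]
        have := ht.1
        positivity
      refine hle.trans (le_of_eq ?_)
      rw [hgval, Nat.factorial_succ]
      have hn : (n ! : ℝ) ≠ 0 := Nat.cast_ne_zero.mpr n.factorial_ne_zero
      push_cast
      field_simp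
  intro i hi t ht
  obtain ⟨n, rfl⟩ : ∃ n, i = n + 1 := ⟨i - 1, by omega⟩
  have h := hbound t ht n t ⟨ht, le_rfl⟩
  simpa using h
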